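/- Let y ∈ ℝ^{n+1} have its centered fractional parts sorted in descending order: {y_1} ≥ {y_2} ≥ … ≥ {y_{n+1}}. Then for every λ ∈ [0, 1) there exists m ∈ {0, 1, …, n+1} such that ⌊y + λ·1⌉ = ⌊y⌉ + Σ_{i=1}^{m} e_i, where e_i denotes the i-th standard basis vector of ℝ^{n+1}. -/

import Mathlib

/-- The all-ones vector in `ℝ^{n+1}`. -/
def ones {n : ℕ} : EuclideanSpace ℝ (Fin (n+1)) := WithLp.toLp 2 (fun _ => 1)

/-- Componentwise nearest-integer rounding of a vector (viewed in `ℝ^{n+1}`). -/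
noncomputable def roundVec {n : ℕ} (y : EuclideanSpace ℝ (Fin (n+1))) :
    EuclideanSpace ℝ (Fin (n+1)) :=
  WithLp.toLp 2 (fun i => (round (y i) : ℝ))

/-- The centered fractional part `{t} = t - ⌊t⌉ ∈ [-1/2, 1/2)`. -/
noncomputable def fract (t : ℝ) : ℝ := t - round t

/-- `∑_{i=1}^{m} e_i`: the sum of the first `m` standard basis vectors of `ℝ^{n+1}`. -/
noncomputable def basisSum (n : ℕ) (m : ℕ) : EuclideanSpace ℝ (Fin (n+1)) :=
  ∑ i ∈ Finset.univ.filter (fun i : Fin (n+1) => (i : ℕ) < m),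
    EuclideanSpace.single i (1 : ℝ)

lemma fract_mem : ∀ t : ℝ, fract t ∈ Set.Ico (-(1/2) : ℝ) (1/2) := by
  intro t
  unfold fract
  rw [round_eq]
  constructor
  · have := Int.floor_le (t + 1/2)
    push_cast
    linarith
  · have := Int.lt_floor_add_one (t + 1/2)
    push_cast
    linarith

lemma round_add_lam (t lam : ℝ) (h0 : 0 ≤ lam) (h1 : lam < 1) :
    (round (t + lam) : ℝ) = round t + (if (1:ℝ)/2 ≤ fract t + lam then 1 else 0) := by
  have hf := fract_mem t
  have ht : t = (round t : ℝ) + fract t := by unfold fract; ring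
  obtain ⟨hl, hr⟩ := hf
  by_cases h : (1:ℝ)/2 ≤ fract t + lam
  · rw [if_pos h]
    have : t + lam = (fract t + lam - 1) + ((round t + 1 : ℤ) : ℝ) := by push_cast; linarith
    rw [this, round_add_intCast]
    have : round (fract t + lam - 1) = 0 := by
      rw [round_eq_zero_iff]
      constructor <;> simp at hr ⊢ <;> linarith
    rw [this]; push_cast; ring
  · rw [if_neg h]
    push_neg at h
    have : t + lam = (fract t + lam) + ((round t : ℤ) : ℝ) := by push_cast; linarith
    rw [this, round_add_intCast]
    have : round (fract t + lam) = 0 := by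
      rw [round_eq_zero_iff]
      constructor <;> simp at hl ⊢ <;> linarith
    rw [this]; simp

/-- If the centered fractional parts of `y` are sorted in descending order,
then for every `λ ∈ [0,1)` there is an `m ∈ {0,…,n+1}` with
`⌊y + λ·1⌉ = ⌊y⌉ + ∑_{i=1}^{m} e_i`. -/
theorem round_add_lambda_eq (n : ℕ) (y : EuclideanSpace ℝ (Fin (n+1)))
    (hsort : ∀ i j : Fin (n+1), i ≤ j → fract (y j) ≤ fract (y i)) :
    ∀ lam ∈ Set.Ico (0 : ℝ) 1, ∃ m ≤ n + 1,
      roundVec (y + lam • ones) = roundVec y + basisSum n m := by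
  intro lam ⟨h0, h1⟩
  set S : Finset (Fin (n+1)) := Finset.univ.filter (fun i => (1:ℝ)/2 ≤ fract (y i) + lam) with hS
  refine ⟨S.card, by have := Finset.card_le_univ S; simpa using this, ?_⟩
  have hmem : ∀ i : Fin (n+1), i ∈ S ↔ (i : ℕ) < S.card := by
    intro i
    constructor
    · intro hi
      have hsub : Finset.Iic i ⊆ S := by
        intro j hj
        simp only [Finset.mem_Iic] at hj
        simp only [hS, Finset.mem_filter, Finset.mem_univ, true_and] at hi ⊢
        have := hsort j i hj
        linarith
      have := Finset.card_le_card hsub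
      rw [Fin.card_Iic] at this; omega
    · intro hi
      by_contra hni
      have hsub : S ⊆ Finset.Iio i := by
        intro j hj
        simp only [Finset.mem_Iio]
        by_contra hij
        push_neg at hij
        apply hni
        simp only [hS, Finset.mem_filter, Finset.mem_univ, true_and] at hj ⊢
        have := hsort i j hij
        linarith
      have := Finset.card_le_card hsub
      rw [Fin.card_Iio] at this
      omega
  ext i
  have hbs : basisSum n S.card i = if (i : ℕ) < S.card then 1 else 0 := by
    unfold basisSum
    rw [WithLp.ofLp_sum, Finset.sum_apply]
    by_cases h : (i : ℕ) < S.card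
    · rw [if_pos h, Finset.sum_eq_single i]
      · simp [EuclideanSpace.single]
      · intro j hj hji
        simp [EuclideanSpace.single, hji.symm]
      · intro hni
        exact absurd (by simpa using h) hni
    · rw [if_neg h, Finset.sum_eq_zero]
      intro j hj
      simp only [Finset.mem_filter, Finset.mem_univ, true_and] at hj
      have : j ≠ i := by rintro rfl; exact h hj
      simp [EuclideanSpace.single, this.symm]
  show (round (y i + lam • ones i) : ℝ) = (round (y i) : ℝ) + basisSum n S.card i
  rw [hbs]
  have : lam • ones i = lam := by simp [ones]
  rw [this, round_add_lam (y i) lam h0 h1]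
  have heq : ((1:ℝ)/2 ≤ fract (y i) + lam) ↔ (i:ℕ) < S.card := by
    rw [← hmem]; simp [hS]
  simp only [heq]
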